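/- Fix an integer d ≥ 2 and an integer k with 1 ≤ k ≤ d². There exist a POVM {M_i}_{i=1}^k on ℂ^d ⊗ ℂ^d and unitaries U_i on ℂ^d such that, with systems C, D, A, B each equal to ℂ^d, Σ_{i=1}^k tr[(ψ⁺_{CB} ⊗ I_{DA}) (I_C ⊗ M_i ⊗ U_i)(ψ⁺_{CD} ⊗ ψ⁺_{AB})(I_C ⊗ I_{DA} ⊗ U_i†)] = k/d². Concretely, one may take U_i to be generalized Pauli (Weyl) unitaries, M_i for i ≤ k−1 to be the transposed projectors onto the corresponding generalized Bell states (U_i† ⊗ I)ψ⁺(U_i ⊗ I), and M_k = I − Σ_{j=1}^{k−1} M_j. -/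

import Mathlib

open Matrix BigOperators ComplexOrder Kronecker

noncomputable section

/-- The maximally entangled state `|ψ⁺⟩ = (1/√n) Σᵢ |i⟩ ⊗ |i⟩` on `ℂ^n ⊗ ℂ^n`. -/
def mes (n : ℕ) : Fin n × Fin n → ℂ :=
  fun p => if p.1 = p.2 then ((1 / Real.sqrt n : ℝ) : ℂ) else 0

/-- The rank-one projector `ψ⁺ = |ψ⁺⟩⟨ψ⁺|` onto the maximally entangled state. -/
def mesProj (n : ℕ) : Matrix (Fin n × Fin n) (Fin n × Fin n) ℂ :=
  Matrix.of fun p q => mes n p * (starRingEnd ℂ) (mes n q)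

/-- Index type for the four systems, ordered as (C, D, A, B), each of dimension `n`. -/
abbrev I4 (n : ℕ) := Fin n × Fin n × Fin n × Fin n

/-- `ψ⁺_{CB} ⊗ I_{DA}` as an operator on C ⊗ D ⊗ A ⊗ B. -/
def psiCB (n : ℕ) : Matrix (I4 n) (I4 n) ℂ :=
  Matrix.of fun p q =>
    mesProj n (p.1, p.2.2.2) (q.1, q.2.2.2) *
      (if p.2.1 = q.2.1 ∧ p.2.2.1 = q.2.2.1 then 1 else 0)

/-- The initial state `ψ⁺_{CD} ⊗ ψ⁺_{AB}` as an operator on C ⊗ D ⊗ A ⊗ B. -/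
def psiInit (n : ℕ) : Matrix (I4 n) (I4 n) ℂ :=
  Matrix.of fun p q =>
    mesProj n (p.1, p.2.1) (q.1, q.2.1) *
      mesProj n (p.2.2.1, p.2.2.2) (q.2.2.1, q.2.2.2)

/-- `I_C ⊗ M_{DA} ⊗ U_B` as an operator on C ⊗ D ⊗ A ⊗ B. -/
def opMid (n : ℕ) (M : Matrix (Fin n × Fin n) (Fin n × Fin n) ℂ)
    (U : Matrix (Fin n) (Fin n) ℂ) : Matrix (I4 n) (I4 n) ℂ :=
  Matrix.of fun p q =>
    (if p.1 = q.1 then 1 else 0) * M (p.2.1, p.2.2.1) (q.2.1, q.2.2.1) *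
      U p.2.2.2 q.2.2.2

/-- `I_C ⊗ I_{DA} ⊗ V_B` as an operator on C ⊗ D ⊗ A ⊗ B. -/
def opB (n : ℕ) (V : Matrix (Fin n) (Fin n) ℂ) : Matrix (I4 n) (I4 n) ℂ :=
  Matrix.of fun p q =>
    (if p.1 = q.1 ∧ p.2.1 = q.2.1 ∧ p.2.2.1 = q.2.2.1 then 1 else 0) *
      V p.2.2.2 q.2.2.2


/-- The entanglement fidelity
`F({Mᵢ, Uᵢ}) = Σᵢ tr[(ψ⁺_{CB} ⊗ I_{DA})(I_C ⊗ Mᵢ ⊗ Uᵢ)(ψ⁺_{CD} ⊗ ψ⁺_{AB})(I_C ⊗ I_{DA} ⊗ Uᵢ†)]`. -/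
def telFid (n k : ℕ) (M : Fin k → Matrix (Fin n × Fin n) (Fin n × Fin n) ℂ)
    (U : Fin k → Matrix (Fin n) (Fin n) ℂ) : ℂ :=
  ∑ i, Matrix.trace (psiCB n * opMid n (M i) (U i) * psiInit n * opB n (U i)ᴴ)

/-! ### Auxiliary material: roots of unity, Weyl operators -/

def zeta (d : ℕ) : ℂ := Complex.exp (2 * Real.pi * Complex.I / d)

/-- The Weyl (generalized Pauli) unitary `X^a Z^b`. -/
def Wm (d : ℕ) [NeZero d] (a b : Fin d) : Matrix (Fin d) (Fin d) ℂ :=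
  Matrix.of fun i j => if i = j + a then zeta d ^ ((b : ℕ) * (j : ℕ)) else 0

lemma zeta_prim (d : ℕ) (hd : 0 < d) : IsPrimitiveRoot (zeta d) d :=
  Complex.isPrimitiveRoot_exp d hd.ne'

lemma zeta_abs (d : ℕ) : ‖zeta d‖ = 1 := by
  rw [zeta, Complex.norm_exp]; norm_num [Complex.div_re, Complex.mul_I_re]

lemma zeta_conj (d : ℕ) : (starRingEnd ℂ) (zeta d) = (zeta d)⁻¹ := by
  rw [Complex.inv_def, Complex.normSq_eq_norm_sq, zeta_abs]; norm_num

lemma zeta_ne_zero (d : ℕ) : zeta d ≠ 0 := Complex.exp_ne_zero _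

lemma zeta_mul_conj (d m : ℕ) : zeta d ^ m * (starRingEnd ℂ) (zeta d ^ m) = 1 := by
  rw [map_pow, zeta_conj, ← mul_pow, mul_inv_cancel₀ (zeta_ne_zero d), one_pow]

lemma key_sum (d : ℕ) (hd : 0 < d) (b b' : Fin d) :
    ∑ j : Fin d, zeta d ^ ((b : ℕ) * (j : ℕ)) * (starRingEnd ℂ) (zeta d ^ ((b' : ℕ) * (j : ℕ)))
      = if b = b' then (d : ℂ) else 0 := by
  have hζ := zeta_prim d hd
  have hne := zeta_ne_zero d
  have hterm : ∀ j : ℕ, zeta d ^ ((b : ℕ) * j) * (starRingEnd ℂ) (zeta d ^ ((b' : ℕ) * j))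
      = (zeta d ^ (b : ℕ) * (zeta d ^ (b' : ℕ))⁻¹) ^ j := by
    intro j
    rw [map_pow, zeta_conj]
    ring
  simp only [hterm]
  rw [Fin.sum_univ_eq_sum_range]
  by_cases h : b = b'
  · subst h
    simp [mul_inv_cancel₀ (pow_ne_zero _ hne)]
  · have hη : zeta d ^ (b : ℕ) * (zeta d ^ (b' : ℕ))⁻¹ ≠ 1 := by
      intro hcon
      apply h
      have : zeta d ^ (b : ℕ) = zeta d ^ (b' : ℕ) := by
        field_simp at hcon
        exact hcon
      exact Fin.ext (hζ.pow_inj b.isLt b'.isLt this)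
    rw [geom_sum_eq hη]
    have : (zeta d ^ (b : ℕ) * (zeta d ^ (b' : ℕ))⁻¹) ^ d = 1 := by
      rw [mul_pow, ← pow_mul, mul_comm (b : ℕ), pow_mul, hζ.pow_eq_one, one_pow, inv_pow,
        ← pow_mul, mul_comm (b' : ℕ), pow_mul, hζ.pow_eq_one, one_pow, inv_one, mul_one]
    rw [this]
    simp [h]

lemma Wm_unitary (d : ℕ) [NeZero d] (a b : Fin d) :
    Wm d a b ∈ Matrix.unitaryGroup (Fin d) ℂ := by
  rw [Matrix.mem_unitaryGroup_iff]
  ext i i'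
  rw [Matrix.mul_apply]
  simp only [Wm, Matrix.of_apply, Matrix.star_apply, apply_ite (star : ℂ → ℂ), star_zero,
    Matrix.one_apply, ite_mul, zero_mul, mul_ite, mul_zero]
  have h1 : ∀ j : Fin d, (i = j + a) ↔ (j = i - a) := fun j => by
    constructor
    · intro h; subst h; simp
    · intro h; subst h; simp
  have h2 : ∀ j : Fin d, (i' = j + a) ↔ (j = i' - a) := fun j => by
    constructor
    · intro h; subst h; simp
    · intro h; subst h; simp
  simp only [h1, h2]
  rw [Finset.sum_ite_eq' ]
  simp only [Finset.mem_univ, if_true]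
  by_cases h : i = i'
  · subst h
    have := zeta_mul_conj d ((b : ℕ) * ((i - a : Fin d) : ℕ))
    rw [map_pow] at this
    simp [this]
  · have hne : ¬ (i - a = i' - a) := fun hc => h (by simpa using congrArg (· + a) hc)
    rw [if_neg (fun hc => hne hc.symm)]
    rw [if_neg h]

/-- The vectorization of the Weyl operator. -/
def uvec (d : ℕ) [NeZero d] (s : Fin d × Fin d) : Fin d × Fin d → ℂ :=
  fun p => Wm d s.1 s.2 p.1 p.2

/-- Orthogonality of vectorized Weyl operators. -/
lemma uvec_orth (d : ℕ) [NeZero d] (hd : 0 < d) (s t : Fin d × Fin d) :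
    ∑ p : Fin d × Fin d, (starRingEnd ℂ) (uvec d s p) * uvec d t p
      = if s = t then (d : ℂ) else 0 := by
  obtain ⟨a, b⟩ := s
  obtain ⟨a', b'⟩ := t
  simp only [uvec, Wm, Matrix.of_apply]
  rw [Fintype.sum_prod_type, Finset.sum_comm]
  simp only [apply_ite (starRingEnd ℂ), map_zero, ite_mul, zero_mul, mul_ite, mul_zero,
    Finset.sum_ite_eq', Finset.mem_univ, if_true, add_right_inj,
    Finset.sum_ite_irrel, Finset.sum_const_zero]
  have hue : ∑ x : Fin d, (starRingEnd ℂ) (zeta d ^ ((b : ℕ) * (x : ℕ))) * zeta d ^ ((b' : ℕ) * (x : ℕ))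
      = if b' = b then (d : ℂ) else 0 := by
    rw [← key_sum d hd b' b]
    exact Finset.sum_congr rfl fun x _ => mul_comm _ _
  rw [hue]
  by_cases ha : a' = a
  · subst ha
    by_cases hb : b' = b
    · subst hb; simp
    · rw [if_neg hb, if_pos rfl, if_neg (fun h : (a', b) = (a', b') => hb (congrArg Prod.snd h).symm)]
  · rw [if_neg ha, if_neg (fun h : (a, b) = (a', b') => ha (congrArg Prod.fst h).symm)]

/-- The (1/d)-scaled rank-one projector onto the vectorized Weyl operator. -/
def Pm (d : ℕ) [NeZero d] (s : Fin d × Fin d) :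
    Matrix (Fin d × Fin d) (Fin d × Fin d) ℂ :=
  Matrix.of fun p q => (1 / (d : ℂ)) * uvec d s p * (starRingEnd ℂ) (uvec d s q)

lemma Pm_posSemidef (d : ℕ) [NeZero d] (s : Fin d × Fin d) : (Pm d s).PosSemidef := by
  have : Pm d s = (Matrix.of fun (_ : Fin 1) q => ((1 / Real.sqrt d : ℝ) : ℂ) *
      (starRingEnd ℂ) (uvec d s q))ᴴ * (Matrix.of fun (_ : Fin 1) q =>
      ((1 / Real.sqrt d : ℝ) : ℂ) * (starRingEnd ℂ) (uvec d s q)) := by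
    ext p q
    rw [Matrix.mul_apply]
    simp only [Matrix.conjTranspose_apply, Matrix.of_apply, Pm, Finset.univ_unique,
      Finset.sum_singleton, star_mul', Complex.star_def, Complex.conj_conj,
      Complex.conj_ofReal]
    have hc : ((1 / Real.sqrt d : ℝ) : ℂ) * ((1 / Real.sqrt d : ℝ) : ℂ) = 1 / (d : ℂ) := by
      rw [← Complex.ofReal_mul, div_mul_div_comm, one_mul,
        Real.mul_self_sqrt (Nat.cast_nonneg d)]
      push_cast
      ring
    rw [← hc]
    ring
  rw [this]
  exact Matrix.posSemidef_conjTranspose_mul_self _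

lemma Pm_complete (d : ℕ) [NeZero d] (hd : 0 < d) :
    ∑ s : Fin d × Fin d, Pm d s = 1 := by
  ext p q
  simp only [Matrix.sum_apply, Pm, Matrix.of_apply, uvec, Wm]
  have h1 : ∀ a : Fin d, (p.1 = p.2 + a) ↔ (a = p.1 - p.2) := fun a => by
    constructor
    · intro h; rw [h, add_sub_cancel_left]
    · intro h; subst h; rw [add_sub_cancel]
  have h2 : ∀ a : Fin d, (q.1 = q.2 + a) ↔ (a = q.1 - q.2) := fun a => by
    constructor
    · intro h; rw [h, add_sub_cancel_left]
    · intro h; subst h; rw [add_sub_cancel]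
  simp only [h1, h2, Fintype.sum_prod_type]
  rw [Finset.sum_comm]
  simp only [apply_ite (starRingEnd ℂ), map_zero, ite_mul, mul_ite, mul_zero, zero_mul,
    Finset.sum_ite_irrel, Finset.sum_const_zero, Finset.sum_ite_eq, Finset.sum_ite_eq',
    Finset.mem_univ, if_true]
  have hd' : (d : ℂ) ≠ 0 := Nat.cast_ne_zero.mpr hd.ne'
  have hk : (∑ x : Fin d, 1 / (d:ℂ) * zeta d ^ ((x:ℕ) * (p.2:ℕ)) *
      (starRingEnd ℂ) (zeta d ^ ((x:ℕ) * (q.2:ℕ)))) = if p.2 = q.2 then 1 else 0 := by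
    have hks := key_sum d hd p.2 q.2
    have hmc : ∀ x : Fin d, 1 / (d:ℂ) * zeta d ^ ((x:ℕ) * (p.2:ℕ)) *
        (starRingEnd ℂ) (zeta d ^ ((x:ℕ) * (q.2:ℕ)))
        = 1/(d:ℂ) * (zeta d ^ ((p.2:ℕ) * (x:ℕ)) *
          (starRingEnd ℂ) (zeta d ^ ((q.2:ℕ) * (x:ℕ)))) := fun x => by
      rw [mul_comm (x:ℕ) (p.2:ℕ), mul_comm (x:ℕ) (q.2:ℕ)]; ring
    rw [Finset.sum_congr rfl fun x _ => hmc x, ← Finset.mul_sum, hks]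
    split_ifs
    · field_simp
    · ring
  rw [hk]
  by_cases hpq : p = q
  · subst hpq; simp [Matrix.one_apply]
  · rw [Matrix.one_apply, if_neg hpq]
    split_ifs with hA hB
    · exfalso
      apply hpq
      have hq1 : q.1 = p.1 := by rwa [← hB, sub_left_inj] at hA
      exact Prod.ext hq1.symm hB
    · rfl
    · rfl

/-- The quadratic form of a matrix against a vectorized Weyl operator. -/
lemma Pm_form (d : ℕ) [NeZero d] (hd : 0 < d) (s t : Fin d × Fin d) :
    ∑ x : Fin d × Fin d, ∑ y : Fin d × Fin d,
        (starRingEnd ℂ) (uvec d t x) * Pm d s x y * uvec d t y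
      = if s = t then (d : ℂ) else 0 := by
  have h1 := uvec_orth d hd t t
  have h2 := uvec_orth d hd s t
  have h3 := uvec_orth d hd t s
  have hx : ∀ x, ∑ y, (starRingEnd ℂ) (uvec d t x) * Pm d s x y * uvec d t y
      = (1 / (d : ℂ)) * ((starRingEnd ℂ) (uvec d t x) * uvec d s x) *
        ∑ y, (starRingEnd ℂ) (uvec d s y) * uvec d t y := by
    intro x
    rw [Finset.mul_sum]
    exact Finset.sum_congr rfl fun y _ => by simp only [Pm, Matrix.of_apply]; ring
  simp only [hx, h2]
  rw [← Finset.sum_mul]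
  by_cases h : s = t
  · subst h
    rw [if_pos rfl, ← Finset.mul_sum, h1, if_pos rfl]
    have hd' : (d : ℂ) ≠ 0 := Nat.cast_ne_zero.mpr hd.ne'
    field_simp
  · rw [if_neg h, mul_zero]

set_option maxHeartbeats 1000000 in
lemma prodL (n : ℕ) (M : Matrix (Fin n × Fin n) (Fin n × Fin n) ℂ)
    (U : Matrix (Fin n) (Fin n) ℂ) (p r : I4 n) :
    (psiCB n * opMid n M U) p r =
      (if p.1 = p.2.2.2 then ((1 / Real.sqrt n : ℝ) : ℂ) * ((1 / Real.sqrt n : ℝ) : ℂ) else 0)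
        * M (p.2.1, p.2.2.1) (r.2.1, r.2.2.1) * U r.1 r.2.2.2 := by
  simp only [Matrix.mul_apply, psiCB, opMid, mesProj, mes, Matrix.of_apply,
    Fintype.sum_prod_type, ite_and, apply_ite (starRingEnd ℂ), map_zero, mul_ite, ite_mul,
    zero_mul, mul_zero, Finset.sum_ite_eq, Finset.sum_ite_eq', Finset.mem_univ, if_true,
    Finset.sum_ite_irrel, Finset.sum_const_zero]
  split
  · rw [Complex.conj_ofReal]; ring
  · rfl

set_option maxHeartbeats 1000000 in
lemma prodR (n : ℕ) (V : Matrix (Fin n) (Fin n) ℂ) (r p : I4 n) :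
    (psiInit n * opB n V) r p =
      (if r.1 = r.2.1 then ((1 / Real.sqrt n : ℝ) : ℂ) * ((1 / Real.sqrt n : ℝ) : ℂ) else 0)
        * (if r.2.2.1 = r.2.2.2 then ((1 / Real.sqrt n : ℝ) : ℂ) * ((1 / Real.sqrt n : ℝ) : ℂ) else 0)
        * (if p.1 = p.2.1 then 1 else 0) * V p.2.2.1 p.2.2.2 := by
  simp only [Matrix.mul_apply, psiInit, opB, mesProj, mes, Matrix.of_apply,
    Fintype.sum_prod_type, ite_and, apply_ite (starRingEnd ℂ), map_zero, mul_ite, ite_mul,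
    zero_mul, mul_zero, Finset.sum_ite_eq, Finset.sum_ite_eq', Finset.mem_univ, if_true,
    Finset.sum_ite_irrel, Finset.sum_const_zero]
  split_ifs <;> simp [Complex.conj_ofReal]

set_option maxHeartbeats 1000000 in
/-- The central computation: the fidelity of a single term as a quadratic form. -/
lemma term_eq (n : ℕ) (hn : 0 < n) (M : Matrix (Fin n × Fin n) (Fin n × Fin n) ℂ)
    (U : Matrix (Fin n) (Fin n) ℂ) :
    Matrix.trace (psiCB n * opMid n M U * psiInit n * opB n Uᴴ) =
      (1 / (n : ℂ) ^ 3) * ∑ x : Fin n × Fin n, ∑ y : Fin n × Fin n,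
        (starRingEnd ℂ) (U x.1 x.2) * M x y * U y.1 y.2 := by
  rw [mul_assoc (psiCB n * opMid n M U)]
  have hT : Matrix.trace ((psiCB n * opMid n M U) * (psiInit n * opB n Uᴴ)) =
      ∑ p, ∑ r, (psiCB n * opMid n M U) p r * (psiInit n * opB n Uᴴ) r p := by
    simp [Matrix.trace, Matrix.diag, Matrix.mul_apply]
  rw [hT]
  simp only [prodL, prodR, Matrix.conjTranspose_apply]
  simp only [Fintype.sum_prod_type, ite_mul, mul_ite, zero_mul, mul_zero,
    Finset.sum_ite_eq, Finset.sum_ite_eq', Finset.mem_univ, if_true,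
    Finset.sum_ite_irrel, Finset.sum_const_zero]
  have hc : ((1 / Real.sqrt n : ℝ) : ℂ) * ((1 / Real.sqrt n : ℝ) : ℂ) = 1 / (n : ℂ) := by
    rw [← Complex.ofReal_mul, div_mul_div_comm, one_mul,
      Real.mul_self_sqrt (Nat.cast_nonneg n)]
    push_cast
    ring
  simp only [Finset.mul_sum]
  refine Finset.sum_congr rfl fun x _ => Finset.sum_congr rfl fun x1 _ =>
    Finset.sum_congr rfl fun x2 _ => Finset.sum_congr rfl fun x3 _ => ?_
  rw [hc, starRingEnd_apply]
  have hn' : (n : ℂ) ≠ 0 := Nat.cast_ne_zero.mpr hn.ne'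
  field_simp

set_option maxHeartbeats 2000000 in
/-- There exist a `k`-element POVM on D ⊗ A and unitaries on B achieving
entanglement fidelity exactly `k/d²` in the constrained teleportation protocol. -/
theorem constrained_teleportation_achievable (d k : ℕ) (hd : 2 ≤ d) (hk1 : 1 ≤ k)
    (hk2 : k ≤ d ^ 2) :
    ∃ (M : Fin k → Matrix (Fin d × Fin d) (Fin d × Fin d) ℂ)
      (U : Fin k → Matrix (Fin d) (Fin d) ℂ),
      (∀ i, (M i).PosSemidef) ∧ (∑ i, M i = 1) ∧
      (∀ i, U i ∈ Matrix.unitaryGroup (Fin d) ℂ) ∧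
      telFid d k M U = (k : ℂ) / (d : ℂ) ^ 2 := by
  haveI : NeZero d := ⟨by omega⟩
  have hd0 : 0 < d := by omega
  have hkd : k ≤ d * d := by rwa [pow_two] at hk2
  set e : Fin k → Fin d × Fin d := fun i => finProdFinEquiv.symm (Fin.castLE hkd i) with he_def
  have he : Function.Injective e := fun i j h => by
    have := finProdFinEquiv.symm.injective h
    exact Fin.castLE_injective hkd this
  set ℓ : Fin k := ⟨k - 1, by omega⟩ with hℓ_def
  set S : Finset (Fin d × Fin d) := (Finset.univ.erase ℓ).image e with hS_def
  have heS : e ℓ ∈ Sᶜ := by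
    rw [Finset.mem_compl, hS_def]
    intro hmem
    obtain ⟨j, hj, hje⟩ := Finset.mem_image.mp hmem
    exact (Finset.mem_erase.mp hj).1 (he hje)
  set Mf : Fin k → Matrix (Fin d × Fin d) (Fin d × Fin d) ℂ :=
    fun j => if j = ℓ then ∑ t ∈ Sᶜ, Pm d t else Pm d (e j) with hMf_def
  refine ⟨Mf, fun i => Wm d (e i).1 (e i).2, ?_, ?_, fun i => Wm_unitary d _ _, ?_⟩
  · intro i
    rw [hMf_def]
    by_cases h : i = ℓ
    · simp only [h, if_pos rfl]
      exact Finset.sum_induction _ _ (fun a b ha hb => ha.add hb) Matrix.PosSemidef.zero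
        (fun t _ => Pm_posSemidef d t)
    · simp only [if_neg h]
      exact Pm_posSemidef d (e i)
  · rw [← Finset.sum_erase_add _ _ (Finset.mem_univ ℓ)]
    have h1 : ∑ j ∈ Finset.univ.erase ℓ, Mf j = ∑ t ∈ S, Pm d t := by
      rw [hS_def, Finset.sum_image (fun i _ j _ h => he h)]
      exact Finset.sum_congr rfl fun j hj => by
        rw [hMf_def]; exact if_neg (Finset.mem_erase.mp hj).1
    have h2 : Mf ℓ = ∑ t ∈ Sᶜ, Pm d t := if_pos rfl
    rw [h1, h2, Finset.sum_add_sum_compl]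
    exact Pm_complete d hd0
  · have hform : ∀ i : Fin k,
        (∑ x : Fin d × Fin d, ∑ y : Fin d × Fin d,
          (starRingEnd ℂ) (uvec d (e i) x) * (Mf i) x y * uvec d (e i) y) = (d : ℂ) := by
      intro i
      by_cases h : i = ℓ
      · have hMℓ : Mf i = ∑ t ∈ Sᶜ, Pm d t := by rw [h]; exact if_pos rfl
        rw [hMℓ, h]
        have hswap : (∑ x : Fin d × Fin d, ∑ y : Fin d × Fin d,
            (starRingEnd ℂ) (uvec d (e ℓ) x) * (∑ t ∈ Sᶜ, Pm d t) x y * uvec d (e ℓ) y)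
            = ∑ t ∈ Sᶜ, ∑ x : Fin d × Fin d, ∑ y : Fin d × Fin d,
              (starRingEnd ℂ) (uvec d (e ℓ) x) * Pm d t x y * uvec d (e ℓ) y := by
          simp only [Matrix.sum_apply, Finset.mul_sum, Finset.sum_mul]
          rw [Finset.sum_congr rfl fun x (_ : x ∈ Finset.univ) => Finset.sum_comm]
          exact Finset.sum_comm
        rw [hswap]
        have hpt : ∀ t ∈ Sᶜ, (∑ x : Fin d × Fin d, ∑ y : Fin d × Fin d,
            (starRingEnd ℂ) (uvec d (e ℓ) x) * Pm d t x y * uvec d (e ℓ) y)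
            = if t = e ℓ then (d : ℂ) else 0 := fun t _ => Pm_form d hd0 t (e ℓ)
        rw [Finset.sum_congr rfl hpt, Finset.sum_ite_eq' _ (e ℓ), if_pos heS]
      · have hMi : Mf i = Pm d (e i) := if_neg h
        rw [hMi, Pm_form d hd0 (e i) (e i), if_pos rfl]
    rw [telFid]
    have hterm : ∀ i : Fin k,
        Matrix.trace (psiCB d * opMid d (Mf i) (Wm d (e i).1 (e i).2) * psiInit d *
          opB d (Wm d (e i).1 (e i).2)ᴴ) = 1 / (d : ℂ) ^ 2 := by
      intro i
      rw [term_eq d hd0]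
      have : (∑ x : Fin d × Fin d, ∑ y : Fin d × Fin d,
          (starRingEnd ℂ) (Wm d (e i).1 (e i).2 x.1 x.2) * (Mf i) x y *
            Wm d (e i).1 (e i).2 y.1 y.2) = (d : ℂ) := hform i
      rw [this]
      have hd' : (d : ℂ) ≠ 0 := Nat.cast_ne_zero.mpr hd0.ne'
      field_simp
    rw [Finset.sum_congr rfl fun i _ => hterm i, Finset.sum_const, Finset.card_univ,
      Fintype.card_fin]
    have hd' : (d : ℂ) ≠ 0 := Nat.cast_ne_zero.mpr hd0.ne'
    simp only [nsmul_eq_mul]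
    field_simp
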